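/- arXiv:1608.08527 — 6 statements merged into one kernel-verified Lean document; each statement's English description precedes it below -/
import Mathlib

section
/- Under these hypotheses: (1) ∑_{s∈D} k_s ≤ β^{d−1} · (h − h_u), and (2) ∑_{s∈E} k_s ≥ k − β^{d−1} · h. (This is the 'Excess in Phase 1' lemma: when the elementary subtree is not overfull, the total server mass in deficient regions outside it is at most β_d(h − h_u), and the total server mass in excessive regions outside it is at least k − β_d·h.) -/
open Finset

/-- "Excess in Phase 1": when the elementary subtree is not overfull
(`k_u ≤ ⌊β·h_u⌋ = ⌊β₂·h_u⌋`), the total server mass in deficient regions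
outside it is at most `β_d·(h − h_u)`, and the total server mass in
excessive regions outside it is at least `k − β_d·h`, where `β_ℓ = β^{ℓ−1}`. -/
theorem excess_phase1 {S : Type*} [DecidableEq S]
    (d : ℕ) (hd : 2 ≤ d) (β : ℝ) (hβ1 : 1 < β) (hβ2 : β ≤ 2)
    (D E : Finset S) (hDE : Disjoint D E)
    (ks hs : S → ℕ) (lev : S → ℕ)
    (hlev : ∀ s ∈ D, 1 ≤ lev s ∧ lev s ≤ d)
    (ku hu h : ℕ)
    (hh : hu + ∑ s ∈ D ∪ E, hs s ≤ h)
    (k : ℕ) (hk : k = ku + ∑ s ∈ D ∪ E, ks s)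
    (hksD : ∀ s ∈ D, (ks s : ℤ) ≤ ⌊β ^ (lev s - 1) * (hs s : ℝ)⌋)
    (hku : (ku : ℤ) ≤ ⌊β * (hu : ℝ)⌋) :
    (∑ s ∈ D, (ks s : ℝ)) ≤ β ^ (d - 1) * ((h : ℝ) - (hu : ℝ)) ∧
    (∑ s ∈ E, (ks s : ℝ)) ≥ (k : ℝ) - β ^ (d - 1) * (h : ℝ) := by
  have hβ1' : (1 : ℝ) ≤ β := hβ1.le
  have hβ0 : (0 : ℝ) ≤ β := by linarith
  have key : ∀ s ∈ D, (ks s : ℝ) ≤ β ^ (d - 1) * (hs s : ℝ) := by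
    intro s hsD
    have h1 : (ks s : ℝ) ≤ β ^ (lev s - 1) * (hs s : ℝ) := by
      have := hksD s hsD
      calc (ks s : ℝ) ≤ ((⌊β ^ (lev s - 1) * (hs s : ℝ)⌋ : ℤ) : ℝ) := by exact_mod_cast this
        _ ≤ _ := Int.floor_le _
    refine h1.trans (mul_le_mul_of_nonneg_right ?_ (by positivity))
    exact pow_le_pow_right₀ hβ1' (Nat.sub_le_sub_right (hlev s hsD).2 1)
  have hDsum : (∑ s ∈ D, (ks s : ℝ)) ≤ β ^ (d - 1) * (∑ s ∈ D, (hs s : ℝ)) := by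
    rw [mul_sum]
    exact sum_le_sum key
  have hhsD : (∑ s ∈ D, (hs s : ℝ)) ≤ (h : ℝ) - (hu : ℝ) := by
    have h1 : (∑ s ∈ D, (hs s : ℝ)) ≤ ∑ s ∈ D ∪ E, (hs s : ℝ) :=
      sum_le_sum_of_subset_of_nonneg (subset_union_left) (by intros; positivity)
    have h2 : (hu : ℝ) + ∑ s ∈ D ∪ E, (hs s : ℝ) ≤ (h : ℝ) := by exact_mod_cast hh
    linarith
  have hpow0 : (0 : ℝ) ≤ β ^ (d - 1) := by positivity
  have part1 : (∑ s ∈ D, (ks s : ℝ)) ≤ β ^ (d - 1) * ((h : ℝ) - (hu : ℝ)) :=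
    hDsum.trans (mul_le_mul_of_nonneg_left hhsD hpow0)
  refine ⟨part1, ?_⟩
  have hsplit : (∑ s ∈ D ∪ E, (ks s : ℝ)) = (∑ s ∈ D, (ks s : ℝ)) + ∑ s ∈ E, (ks s : ℝ) :=
    sum_union hDE
  have hkR : (k : ℝ) = (ku : ℝ) + ∑ s ∈ D ∪ E, (ks s : ℝ) := by
    rw [hk]; push_cast; ring
  have hkuR : (ku : ℝ) ≤ β ^ (d - 1) * (hu : ℝ) := by
    have h1 : (ku : ℝ) ≤ β * (hu : ℝ) := by
      calc (ku : ℝ) ≤ ((⌊β * (hu : ℝ)⌋ : ℤ) : ℝ) := by exact_mod_cast hku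
        _ ≤ _ := Int.floor_le _
    have h2 : β ≤ β ^ (d - 1) := by
      calc β = β ^ 1 := (pow_one β).symm
        _ ≤ β ^ (d - 1) := pow_le_pow_right₀ hβ1' (by omega)
    have : β * (hu : ℝ) ≤ β ^ (d - 1) * (hu : ℝ) :=
      mul_le_mul_of_nonneg_right h2 (by positivity)
    linarith
  have hhR : β ^ (d - 1) * (hu : ℝ) + β ^ (d - 1) * ((h : ℝ) - (hu : ℝ)) = β ^ (d - 1) * (h : ℝ) := by ring
  have := part1
  rw [ge_iff_le, hkR, hsplit]
  linarith
end

section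
/- Under these hypotheses: (1) ∑_{s∈D} k_s ≤ k_q/β, and (2) ∑_{s∈E} k_s ≥ k_q/γ. (This is the 'Excess in Phase 2' lemma: when the region below the descending server is overfull relative to threshold β_ℓ, at most a 1/β fraction of its server mass lies in deficient edges and at least a 1/γ fraction lies in excessive edges.) -/
open Finset

/-- "Excess in Phase 2": when the region below the descending server is
overfull relative to threshold `β_ℓ = β^{ℓ−1}` (i.e. `k_q ≥ ⌊β_ℓ·h_q⌋`),
at most a `1/β` fraction of its server mass lies in deficient edges and at
least a `1/γ` fraction lies in excessive edges, with `γ = β/(β−1)`. -/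
theorem excess_phase2 {S : Type*} [DecidableEq S]
    (d ℓ : ℕ) (hd : 2 ≤ d) (hℓ1 : 2 ≤ ℓ) (hℓ2 : ℓ ≤ d)
    (β : ℝ) (hβ1 : 1 < β) (hβ2 : β ≤ 2)
    (γ : ℝ) (hγ : γ = β / (β - 1))
    (D E : Finset S) (hDE : Disjoint D E)
    (ks hs : S → ℕ) (hq : ℕ)
    (hhq : 1 + ∑ s ∈ D ∪ E, hs s ≤ hq)
    (kq : ℕ) (hkq : kq = ∑ s ∈ D ∪ E, ks s)
    (hksD : ∀ s ∈ D, (ks s : ℝ) ≤ β ^ (ℓ - 2) * (hs s : ℝ))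
    (hkqlb : (kq : ℤ) ≥ ⌊β ^ (ℓ - 1) * (hq : ℝ)⌋) :
    (∑ s ∈ D, (ks s : ℝ)) ≤ (kq : ℝ) / β ∧
    (∑ s ∈ E, (ks s : ℝ)) ≥ (kq : ℝ) / γ := by

  have hβ0 : (0:ℝ) < β := lt_trans one_pos hβ1
  have hc1 : (1:ℝ) ≤ β ^ (ℓ - 2) := one_le_pow₀ hβ1.le
  -- split kq
  have hsplit : (kq : ℝ) = (∑ s ∈ D, (ks s : ℝ)) + (∑ s ∈ E, (ks s : ℝ)) := by
    rw [hkq]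
    push_cast
    rw [Finset.sum_union hDE]
  -- bound sum over D
  have hD1 : (∑ s ∈ D, (ks s : ℝ)) ≤ β ^ (ℓ - 2) * (∑ s ∈ D, (hs s : ℝ)) := by
    rw [Finset.mul_sum]
    exact Finset.sum_le_sum hksD
  have hhD : (∑ s ∈ D, (hs s : ℝ)) ≤ (hq : ℝ) - 1 := by
    have h1 : ∑ s ∈ D, hs s ≤ ∑ s ∈ D ∪ E, hs s :=
      Finset.sum_le_sum_of_subset Finset.subset_union_left
    have h2 : ∑ s ∈ D, hs s + 1 ≤ hq := by omega
    have := (Nat.cast_le (α := ℝ)).mpr h2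
    push_cast at this ⊢
    linarith
  have hhq1 : (1:ℝ) ≤ (hq : ℝ) := by
    have : 1 ≤ hq := le_trans (Nat.le_add_right 1 _) hhq
    exact_mod_cast this
  -- floor bound
  have hkqR : β ^ (ℓ - 1) * (hq : ℝ) - 1 ≤ (kq : ℝ) := by
    have h1 : β ^ (ℓ - 1) * (hq : ℝ) - 1 < (⌊β ^ (ℓ - 1) * (hq : ℝ)⌋ : ℝ) :=
      Int.sub_one_lt_floor _
    have h2 : ((⌊β ^ (ℓ - 1) * (hq : ℝ)⌋ : ℤ) : ℝ) ≤ (kq : ℝ) := by exact_mod_cast hkqlb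
    linarith
  have hpow : β ^ (ℓ - 1) = β * β ^ (ℓ - 2) := by
    have : ℓ - 1 = (ℓ - 2) + 1 := by omega
    rw [this, pow_succ]; ring
  rw [hpow] at hkqR
  have key : (∑ s ∈ D, (ks s : ℝ)) * β ≤ (kq : ℝ) := by
    nlinarith [mul_le_mul_of_nonneg_left hhD (le_trans zero_le_one hc1),
      mul_le_mul_of_nonneg_left hhq1 (le_trans zero_le_one hc1)]
  constructor
  · rw [le_div_iff₀ hβ0]; exact key
  · rw [hγ, div_div_eq_mul_div, ge_iff_le, div_le_iff₀ hβ0]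
    nlinarith [key, hsplit]
end

section
/- The inequality 2 + (1/β)·α^D_1 − (1/γ)·α^E_1 + α^D_d ≤ 0 holds. (This is the final inequality in Case 1 of the Phase-1 potential analysis: since (1/γ)α^E_1 ≥ 2 + (1/β)α^D_1 + γ^{d−2}·α^E_d and γ^{d−2}·α^E_d ≥ α^D_d, the online movement cost plus the change in potential during an elementary step of Phase 1 with k_u ≥ ⌊β h_u⌋ is nonpositive.) -/
open Finset

lemma aux_two_pow (n : ℕ) : (2 * n + 3 : ℝ) ≤ 3 * 2 ^ n := by
  induction n with
  | zero => norm_num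
  | succ k ih =>
    have h2 : (1:ℝ) ≤ 2 ^ k := one_le_pow₀ (by norm_num)
    push_cast
    push_cast at ih
    rw [pow_succ]
    nlinarith

/-- The final inequality in Case 1 of the Phase-1 potential analysis:
`2 + (1/β)·α^D_1 − (1/γ)·α^E_1 + α^D_d ≤ 0`. -/
theorem phase1_case1_ineq (d : ℕ) (hd : 2 ≤ d) (β δ γ : ℝ)
    (hβ1 : 1 < β) (hβ2 : β ≤ 2) (hδ : δ ≥ β ^ d)
    (hγ : γ = β / (β - 1))
    (αD αE : ℕ → ℝ)
    (hαD : ∀ l, 1 ≤ l → l ≤ d → αD l = 2 * (l : ℝ) - 1)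
    (hαEd : αE d = δ / (δ - β ^ (d - 1)) * (3 + β ^ (d - 1) / δ * αD d))
    (hαE : ∀ l, 1 ≤ l → l ≤ d - 1 →
      αE l = (∑ i ∈ Finset.Icc l (d - 1), γ ^ (i - l + 1) * (2 + 1 / β * αD i))
        + γ ^ (d - l) * αE d) :
    2 + (1 / β) * αD 1 - (1 / γ) * αE 1 + αD d ≤ 0 := by
  have hβ0 : (0:ℝ) < β := lt_trans one_pos hβ1
  have hγ2 : (2:ℝ) ≤ γ := by
    rw [hγ, le_div_iff₀ (by linarith)]
    linarith
  have hγ0 : (0:ℝ) < γ := by linarith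
  have hd2 : (2:ℝ) ≤ (d:ℝ) := by exact_mod_cast hd
  have hb : (0:ℝ) < β ^ (d-1) := pow_pos hβ0 _
  have hβd : β ^ (d-1) < β ^ d := pow_lt_pow_right₀ hβ1 (by omega)
  have hδpos : (0:ℝ) < δ - β^(d-1) := by linarith
  have hδ0 : (0:ℝ) < δ := by linarith
  have hAd : αD d = 2*(d:ℝ) - 1 := hαD d (by omega) le_rfl
  have h3d : (3:ℝ) ≤ 2*(d:ℝ) - 1 := by linarith
  -- αE d ≥ 3
  have hf1 : (1:ℝ) ≤ δ / (δ - β^(d-1)) := by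
    rw [le_div_iff₀ hδpos]; linarith
  have hf2 : (3:ℝ) ≤ 3 + β^(d-1)/δ * αD d := by
    have : (0:ℝ) ≤ β^(d-1)/δ * αD d :=
      mul_nonneg (div_nonneg hb.le hδ0.le) (by linarith)
    linarith
  have hAE3 : (3:ℝ) ≤ αE d := by
    rw [hαEd]
    nlinarith
  -- γ^(d-2) * αE d ≥ 2d - 1
  have hpow : (2:ℝ)^(d-2) ≤ γ^(d-2) := pow_le_pow_left₀ (by norm_num) hγ2 _
  have hcast : ((d - 2 : ℕ) : ℝ) = (d:ℝ) - 2 := by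
    have := hd; push_cast [Nat.cast_sub hd]; ring
  have haux := aux_two_pow (d - 2)
  rw [hcast] at haux
  have hkey : 2*(d:ℝ) - 1 ≤ γ^(d-2) * αE d := by
    have h2p : (0:ℝ) < (2:ℝ)^(d-2) := pow_pos (by norm_num) _
    nlinarith [mul_le_mul_of_nonneg_left hAE3 (le_trans h2p.le hpow)]
  -- unfold αE 1
  have hE1 := hαE 1 le_rfl (by omega)
  -- lower bound the sum by its first term
  have hterm : ∀ i ∈ Finset.Icc 1 (d-1), (0:ℝ) ≤ γ ^ (i - 1 + 1) * (2 + 1 / β * αD i) := by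
    intro i hi
    simp only [Finset.mem_Icc] at hi
    have hAi : αD i = 2*(i:ℝ) - 1 := hαD i hi.1 (by omega)
    have hi1 : (1:ℝ) ≤ (i:ℝ) := by exact_mod_cast hi.1
    have : (0:ℝ) ≤ 2 + 1/β * αD i := by
      have : (0:ℝ) ≤ 1/β := by positivity
      nlinarith
    positivity
  have hmem : 1 ∈ Finset.Icc 1 (d-1) := by
    simp only [Finset.mem_Icc]; omega
  have hsum : γ ^ (1 - 1 + 1) * (2 + 1 / β * αD 1) ≤
      ∑ i ∈ Finset.Icc 1 (d - 1), γ ^ (i - 1 + 1) * (2 + 1 / β * αD i) :=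
    Finset.single_le_sum hterm hmem
  simp only [Nat.sub_self, Nat.zero_add, pow_one] at hsum
  have hE1ge : γ * (2 + 1/β * αD 1) + γ^(d-1) * αE d ≤ αE 1 := by
    rw [hE1]; linarith
  -- γ^(d-1) = γ * γ^(d-2)
  have hde : d - 1 = (d - 2) + 1 := by omega
  have hpowsplit : γ^(d-1) = γ * γ^(d-2) := by
    rw [hde, pow_succ]; ring
  have hinv : (1/γ) * γ = 1 := by field_simp
  have hfinal : 2 + 1/β * αD 1 + γ^(d-2) * αE d ≤ (1/γ) * αE 1 := by
    have h := mul_le_mul_of_nonneg_left hE1ge (by positivity : (0:ℝ) ≤ 1/γ)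
    rw [mul_add, hpowsplit] at h
    calc 2 + 1/β * αD 1 + γ^(d-2) * αE d
        = (1/γ * γ) * (2 + 1/β * αD 1) + (1/γ * γ) * (γ^(d-2) * αE d) := by
          rw [hinv]; ring
      _ = 1/γ * (γ * (2 + 1/β * αD 1)) + 1/γ * (γ * γ^(d-2) * αE d) := by ring
      _ ≤ 1/γ * αE 1 := by rw [mul_assoc γ] at h ⊢; linarith
  linarith [hkey, hfinal, hAd]
end

section
/- For every integer ℓ with 1 ≤ ℓ ≤ d, both ⌈β^{ℓ−1}⌉ · α^D_ℓ ≤ 2·(2d−1)·γ^d and ⌈β^{ℓ−1}⌉ · α^E_ℓ ≤ 2·(4d+1)·γ^{d+1}. (This makes explicit the lemma that ⌈β_ℓ⌉α^D_ℓ and ⌈β_ℓ⌉α^E_ℓ are of order O(d·γ^{d+1}), which yields the competitive ratio O(d·γ^{d+1}) of the algorithm on depth-d trees.) -/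
open Finset

private lemma geom_bound {γ : ℝ} (hγ : 2 ≤ γ) :
    ∀ n, (∑ k ∈ Finset.range n, γ ^ k) ≤ γ ^ n := by
  intro n
  induction n with
  | zero => simp
  | succ n ih =>
    rw [Finset.sum_range_succ, pow_succ]
    nlinarith [pow_nonneg (by linarith : (0:ℝ) ≤ γ) n]

set_option maxHeartbeats 1600000 in
/-- Explicit form of the lemma that `⌈β_ℓ⌉·α^D_ℓ` and `⌈β_ℓ⌉·α^E_ℓ` are of
order `O(d·γ^{d+1})`: for `1 ≤ ℓ ≤ d`, `⌈β^{ℓ−1}⌉·α^D_ℓ ≤ 2(2d−1)γ^d` and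
`⌈β^{ℓ−1}⌉·α^E_ℓ ≤ 2(4d+1)γ^{d+1}`. -/
theorem alpha_coeff_bounds (d : ℕ) (hd : 2 ≤ d) (β δ γ : ℝ)
    (hβ1 : 1 < β) (hβ2 : β ≤ 2) (hδ : δ ≥ β ^ d)
    (hγ : γ = β / (β - 1))
    (αD αE : ℕ → ℝ)
    (hαD : ∀ l, 1 ≤ l → l ≤ d → αD l = 2 * (l : ℝ) - 1)
    (hαEd : αE d = δ / (δ - β ^ (d - 1)) * (3 + β ^ (d - 1) / δ * αD d))
    (hαE : ∀ l, 1 ≤ l → l ≤ d - 1 →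
      αE l = (∑ i ∈ Finset.Icc l (d - 1), γ ^ (i - l + 1) * (2 + 1 / β * αD i))
        + γ ^ (d - l) * αE d) :
    ∀ l, 1 ≤ l → l ≤ d →
      (⌈β ^ (l - 1)⌉ : ℝ) * αD l ≤ 2 * (2 * (d : ℝ) - 1) * γ ^ d ∧
      (⌈β ^ (l - 1)⌉ : ℝ) * αE l ≤ 2 * (4 * (d : ℝ) + 1) * γ ^ (d + 1) := by
  intro l hl1 hld
  have hβ0 : (0:ℝ) < β := by linarith
  have hβm1 : (0:ℝ) < β - 1 := by linarith
  have hγ2 : 2 ≤ γ := by rw [hγ, le_div_iff₀ hβm1]; linarith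
  have hγ0 : (0:ℝ) < γ := by linarith
  have hγ1 : (1:ℝ) ≤ γ := by linarith
  have hβγ : β ≤ γ := by rw [hγ, le_div_iff₀ hβm1]; nlinarith
  have hdR : (2:ℝ) ≤ (d:ℝ) := by exact_mod_cast hd
  have hlR : (l:ℝ) ≤ (d:ℝ) := by exact_mod_cast hld
  have hlR1 : (1:ℝ) ≤ (l:ℝ) := by exact_mod_cast hl1
  -- ceiling bound
  have hpow1 : (1:ℝ) ≤ β ^ (l - 1) := one_le_pow₀ hβ1.le
  have hceil : (⌈β ^ (l - 1)⌉ : ℝ) ≤ 2 * β ^ (l - 1) := by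
    have := Int.ceil_lt_add_one (β ^ (l - 1))
    linarith
  have hceil0 : (0:ℝ) ≤ (⌈β ^ (l - 1)⌉ : ℝ) := by
    exact_mod_cast Int.ceil_nonneg (by positivity : (0:ℝ) ≤ β ^ (l - 1))
  have hβγpow : β ^ (l - 1) ≤ γ ^ (l - 1) := pow_le_pow_left₀ hβ0.le hβγ _
  have hγld : γ ^ (l - 1) ≤ γ ^ d := pow_le_pow_right₀ hγ1 (by omega)
  -- αD bound
  have hαDl : αD l = 2 * (l:ℝ) - 1 := hαD l hl1 hld
  have h2l0 : (0:ℝ) ≤ 2 * (l:ℝ) - 1 := by linarith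
  have hD : (⌈β ^ (l - 1)⌉ : ℝ) * αD l ≤ 2 * (2 * (d:ℝ) - 1) * γ ^ d := by
    rw [hαDl]
    have h1 : (⌈β ^ (l - 1)⌉ : ℝ) * (2 * (l:ℝ) - 1) ≤ (2 * β ^ (l - 1)) * (2 * (l:ℝ) - 1) :=
      mul_le_mul_of_nonneg_right hceil h2l0
    have hb : β ^ (l - 1) ≤ γ ^ d := hβγpow.trans hγld
    nlinarith [pow_pos hγ0 d]
  refine ⟨hD, ?_⟩
  -- αE d bound
  have hβd1 : (0:ℝ) < β ^ (d - 1) := pow_pos hβ0 _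
  have hβdδ : β ^ (d - 1) * β ≤ δ := by
    have h : β ^ (d - 1) * β = β ^ d := by
      rw [← pow_succ]; congr 1; omega
    linarith [hδ]
  have hδpos : (0:ℝ) < δ := lt_of_lt_of_le (pow_pos hβ0 d) hδ
  have hden : (0:ℝ) < δ - β ^ (d - 1) := by nlinarith
  have hfrac : δ / (δ - β ^ (d - 1)) ≤ γ := by
    rw [hγ, div_le_div_iff₀ hden hβm1]; nlinarith
  have hfrac2 : β ^ (d - 1) / δ ≤ 1 := by
    rw [div_le_one hδpos]; nlinarith
  have hfrac2' : (0:ℝ) ≤ β ^ (d - 1) / δ := by positivity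
  have hαDd : αD d = 2 * (d:ℝ) - 1 := hαD d (by omega) le_rfl
  have hEd : αE d ≤ (2 * (d:ℝ) + 2) * γ := by
    rw [hαEd, hαDd]
    have hx : β ^ (d - 1) / δ * (2 * (d:ℝ) - 1) ≤ 1 * (2 * (d:ℝ) - 1) :=
      mul_le_mul_of_nonneg_right hfrac2 (by linarith)
    have hx0 : (0:ℝ) ≤ β ^ (d - 1) / δ * (2 * (d:ℝ) - 1) :=
      mul_nonneg hfrac2' (by linarith)
    have h3 : 3 + β ^ (d - 1) / δ * (2 * (d:ℝ) - 1) ≤ 2 * (d:ℝ) + 2 := by linarith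
    have h30 : (0:ℝ) ≤ 3 + β ^ (d - 1) / δ * (2 * (d:ℝ) - 1) := by linarith
    have hf0 : (0:ℝ) ≤ δ / (δ - β ^ (d - 1)) := by positivity
    calc δ / (δ - β ^ (d - 1)) * (3 + β ^ (d - 1) / δ * (2 * (d:ℝ) - 1))
        ≤ γ * (2 * (d:ℝ) + 2) := mul_le_mul hfrac h3 h30 (by linarith)
      _ = (2 * (d:ℝ) + 2) * γ := by ring
  -- main αE bound
  rcases eq_or_lt_of_le hld with rfl | hlt
  · -- l = d
    calc (⌈β ^ (l - 1)⌉ : ℝ) * αE l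
        ≤ (⌈β ^ (l - 1)⌉ : ℝ) * ((2 * (l:ℝ) + 2) * γ) :=
          mul_le_mul_of_nonneg_left hEd hceil0
      _ ≤ (2 * β ^ (l - 1)) * ((2 * (l:ℝ) + 2) * γ) :=
          mul_le_mul_of_nonneg_right hceil (mul_nonneg (by linarith) hγ0.le)
      _ ≤ (2 * γ ^ (l - 1)) * ((2 * (l:ℝ) + 2) * γ) :=
          mul_le_mul_of_nonneg_right (by linarith) (mul_nonneg (by linarith) hγ0.le)
      _ = 2 * (2 * (l:ℝ) + 2) * (γ ^ (l - 1) * γ) := by ring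
      _ = 2 * (2 * (l:ℝ) + 2) * γ ^ l := by rw [← pow_succ]; congr 2; omega
      _ ≤ 2 * (4 * (l:ℝ) + 1) * γ ^ (l + 1) := by
          have hp : γ ^ l ≤ γ ^ (l + 1) := pow_le_pow_right₀ hγ1 (by omega)
          have hp0 : (0:ℝ) ≤ γ ^ l := by positivity
          nlinarith
  · -- l ≤ d - 1
    have hld1 : l ≤ d - 1 := by omega
    have hE := hαE l hl1 hld1
    -- sum bound
    have hterm : ∀ i ∈ Finset.Icc l (d - 1),
        γ ^ (i - l + 1) * (2 + 1 / β * αD i) ≤ γ ^ (i - l + 1) * (2 * (d:ℝ) - 1) := by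
      intro i hi
      rw [Finset.mem_Icc] at hi
      have hi1 : 1 ≤ i := le_trans hl1 hi.1
      have hid : i ≤ d := by omega
      have hαDi : αD i = 2 * (i:ℝ) - 1 := hαD i hi1 hid
      have hiR : (1:ℝ) ≤ (i:ℝ) := by exact_mod_cast hi1
      have hiR2 : (i:ℝ) ≤ (d:ℝ) - 1 := by
        have : (i:ℝ) ≤ ((d - 1 : ℕ) : ℝ) := by exact_mod_cast hi.2
        rwa [Nat.cast_sub (by omega), Nat.cast_one] at this
      have hb : 1 / β ≤ 1 := by rw [div_le_one hβ0]; linarith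
      have hb0 : (0:ℝ) ≤ 1 / β := by positivity
      have h2i : 1 / β * αD i ≤ 2 * (i:ℝ) - 1 := by
        rw [hαDi]; nlinarith
      have hp0 : (0:ℝ) ≤ γ ^ (i - l + 1) := by positivity
      apply mul_le_mul_of_nonneg_left _ hp0
      linarith
    have hsum1 : (∑ i ∈ Finset.Icc l (d - 1), γ ^ (i - l + 1) * (2 + 1 / β * αD i))
        ≤ (∑ i ∈ Finset.Icc l (d - 1), γ ^ (i - l + 1)) * (2 * (d:ℝ) - 1) := by
      rw [Finset.sum_mul]
      exact Finset.sum_le_sum hterm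
    have hsum2 : (∑ i ∈ Finset.Icc l (d - 1), γ ^ (i - l + 1)) ≤ γ ^ (d - l + 1) := by
      rw [← Finset.Ico_add_one_right_eq_Icc, Finset.sum_Ico_eq_sum_range]
      have hn : d - 1 + 1 - l = d - l := by omega
      rw [hn]
      have heq : ∀ i, γ ^ (l + i - l + 1) = γ ^ i * γ := by
        intro i
        rw [Nat.add_sub_cancel_left, pow_succ]
      simp_rw [heq]
      rw [← Finset.sum_mul, pow_succ]
      exact mul_le_mul_of_nonneg_right (geom_bound hγ2 _) hγ0.le
    have hEl : αE l ≤ (4 * (d:ℝ) + 1) * γ ^ (d - l + 1) := by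
      rw [hE]
      have hpow0 : (0:ℝ) ≤ γ ^ (d - l) := by positivity
      have h2 : γ ^ (d - l) * αE d ≤ γ ^ (d - l) * ((2 * (d:ℝ) + 2) * γ) :=
        mul_le_mul_of_nonneg_left hEd hpow0
      have h3 : γ ^ (d - l) * γ = γ ^ (d - l + 1) := (pow_succ γ _).symm
      have hs : (∑ i ∈ Finset.Icc l (d - 1), γ ^ (i - l + 1)) * (2 * (d:ℝ) - 1)
          ≤ γ ^ (d - l + 1) * (2 * (d:ℝ) - 1) :=
        mul_le_mul_of_nonneg_right hsum2 (by linarith)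
      nlinarith [pow_nonneg hγ0.le (d - l + 1)]
    have hB0 : (0:ℝ) ≤ (4 * (d:ℝ) + 1) * γ ^ (d - l + 1) := by positivity
    calc (⌈β ^ (l - 1)⌉ : ℝ) * αE l
        ≤ (⌈β ^ (l - 1)⌉ : ℝ) * ((4 * (d:ℝ) + 1) * γ ^ (d - l + 1)) :=
          mul_le_mul_of_nonneg_left hEl hceil0
      _ ≤ (2 * β ^ (l - 1)) * ((4 * (d:ℝ) + 1) * γ ^ (d - l + 1)) :=
          mul_le_mul_of_nonneg_right hceil hB0
      _ ≤ (2 * γ ^ (l - 1)) * ((4 * (d:ℝ) + 1) * γ ^ (d - l + 1)) :=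
          mul_le_mul_of_nonneg_right (by linarith) hB0
      _ = 2 * (4 * (d:ℝ) + 1) * (γ ^ (l - 1) * γ ^ (d - l + 1)) := by ring
      _ = 2 * (4 * (d:ℝ) + 1) * γ ^ d := by rw [← pow_add]; congr 2; omega
      _ ≤ 2 * (4 * (d:ℝ) + 1) * γ ^ (d + 1) := by
          have hp : γ ^ d ≤ γ ^ (d + 1) := pow_le_pow_right₀ hγ1 (by omega)
          nlinarith
end

section
/- For every integer ℓ with 2 ≤ ℓ ≤ d, α^E_ℓ < α^E_{ℓ−1}; that is, the excess coefficients strictly decrease with the level. -/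
open Finset

/-- The excess coefficients strictly decrease with the level:
`α^E_ℓ < α^E_{ℓ−1}` for `2 ≤ ℓ ≤ d`. -/
theorem alphaE_strict_anti (d : ℕ) (hd : 2 ≤ d) (β δ γ : ℝ)
    (hβ1 : 1 < β) (hβ2 : β ≤ 2) (hδ : δ ≥ β ^ d)
    (hγ : γ = β / (β - 1))
    (αD αE : ℕ → ℝ)
    (hαD : ∀ l, 1 ≤ l → l ≤ d → αD l = 2 * (l : ℝ) - 1)
    (hαEd : αE d = δ / (δ - β ^ (d - 1)) * (3 + β ^ (d - 1) / δ * αD d))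
    (hαE : ∀ l, 1 ≤ l → l ≤ d - 1 →
      αE l = (∑ i ∈ Finset.Icc l (d - 1), γ ^ (i - l + 1) * (2 + 1 / β * αD i))
        + γ ^ (d - l) * αE d) :
    ∀ l, 2 ≤ l → l ≤ d → αE l < αE (l - 1) := by
  have hβ0 : (0:ℝ) < β := by linarith
  have hβs : (0:ℝ) < β - 1 := by linarith
  have hγ1 : 1 < γ := by rw [hγ, lt_div_iff₀ hβs]; linarith
  have hγ0 : (0:ℝ) < γ := by linarith
  have hbd1 : (0:ℝ) < β ^ (d-1) := pow_pos hβ0 _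
  have hβd : β ^ (d-1) < β ^ d := by
    apply pow_lt_pow_right₀ hβ1; omega
  have hδ1 : β ^ (d-1) < δ := lt_of_lt_of_le hβd hδ
  have hδ0 : (0:ℝ) < δ := lt_trans hbd1 hδ1
  have hαDd : αD d = 2*(d:ℝ) - 1 := hαD d (by omega) le_rfl
  have hEd0 : 0 < αE d := by
    rw [hαEd, hαDd]
    have h2 : (2:ℝ) ≤ (d:ℝ) := by exact_mod_cast hd
    have ha : 0 < δ / (δ - β^(d-1)) := div_pos hδ0 (by linarith)
    have hb : 0 < β^(d-1)/δ := div_pos hbd1 hδ0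
    have hc : 0 < 3 + β^(d-1)/δ * (2*(d:ℝ)-1) := by nlinarith
    exact mul_pos ha hc
  have ht : ∀ i, 1 ≤ i → i ≤ d → 0 < 2 + 1/β * αD i := by
    intro i h1 h2
    rw [hαD i h1 h2]
    have hi1 : (1:ℝ) ≤ (i:ℝ) := by exact_mod_cast h1
    have hb : 0 < 1/β := by positivity
    nlinarith
  have hE0 : ∀ l, 1 ≤ l → l ≤ d - 1 → 0 < αE l := by
    intro l h1 h2
    rw [hαE l h1 h2]
    have hsum : 0 ≤ ∑ i ∈ Icc l (d-1), γ^(i-l+1) * (2+1/β*αD i) := by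
      apply Finset.sum_nonneg
      intro i hi
      rw [mem_Icc] at hi
      exact le_of_lt (mul_pos (pow_pos hγ0 _) (ht i (le_trans h1 hi.1) (by omega)))
    have hlast : 0 < γ^(d-l) * αE d := mul_pos (pow_pos hγ0 _) hEd0
    linarith
  intro l hl2 hld
  obtain ⟨m, rfl⟩ : ∃ m, l = m + 1 := ⟨l - 1, by omega⟩
  have hm1 : 1 ≤ m := by omega
  have hmd : m ≤ d - 1 := by omega
  show αE (m+1) < αE m
  have htm := ht m hm1 (by omega)
  -- split the sum in αE m
  have hsplit : Icc m (d-1) = insert m (Icc (m+1) (d-1)) := by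
    ext x; simp only [mem_Icc, mem_insert]; omega
  have hmnot : m ∉ Icc (m+1) (d-1) := by simp
  have key : αE m = γ * (2 + 1/β * αD m)
      + (γ * ∑ i ∈ Icc (m+1) (d-1), γ^(i-(m+1)+1) * (2+1/β*αD i))
      + γ * γ^(d-(m+1)) * αE d := by
    rw [hαE m hm1 hmd, hsplit, Finset.sum_insert hmnot]
    have e1 : m - m + 1 = 1 := by omega
    rw [e1, pow_one]
    have e2 : ∑ i ∈ Icc (m+1) (d-1), γ^(i-m+1) * (2+1/β*αD i)
        = γ * ∑ i ∈ Icc (m+1) (d-1), γ^(i-(m+1)+1) * (2+1/β*αD i) := by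
      rw [Finset.mul_sum]
      refine Finset.sum_congr rfl fun i hi => ?_
      rw [mem_Icc] at hi
      have e : i - m + 1 = (i - (m+1) + 1) + 1 := by omega
      rw [e, pow_succ]; ring
    have e3 : γ^(d-m) = γ * γ^(d-(m+1)) := by
      have e : d - m = (d-(m+1)) + 1 := by omega
      rw [e]
      exact pow_succ' γ _
    rw [e2, e3]
  rcases Nat.lt_or_ge (m+1) d with hcase | hcase
  · have hE1 := hαE (m+1) (by omega) (by omega)
    have hp := hE0 (m+1) (by omega) (by omega)
    have key2 : αE m = γ*(2+1/β*αD m) + γ*αE (m+1) := by rw [key, hE1]; ring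
    rw [key2]
    nlinarith
  · have hmd' : m + 1 = d := by omega
    have hempty : Icc (m+1) (d-1) = ∅ := by
      apply Icc_eq_empty; omega
    have e4 : d - (m+1) = 0 := by omega
    rw [key, hempty, Finset.sum_empty, e4, pow_zero, hmd']
    nlinarith
end

section
/- Let h ≥ 1 be an integer and ε a real with 0 < ε ≤ 1/4. Then: (1) for every integer i ≥ 1, ⌊(1−ε)/ε⌋ · (2(i−1)+1) · ε ≥ (1−2ε)·(2i−1); and (2) 1 + ∑_{i=2}^{h} (1−2ε)·(2i−1) ≥ (1−2ε)·h² ≥ h²/2. Consequently, in each phase of the adversarial strategy against the Double Coverage algorithm on the depth-2 HST, the online cost is at least h²/2 while the adversary's cost is 2h, so the ratio per phase is at least h/4. -/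
open Finset

/-- Cost accounting for the lower bound against Double Coverage on a
depth-2 HST: per-step estimate and the total per-phase cost of at least `h²/2`. -/
theorem dc_phase_cost (h : ℕ) (hh : 1 ≤ h) (ε : ℝ) (hε0 : 0 < ε) (hε : ε ≤ 1/4) :
    (∀ i : ℕ, 1 ≤ i →
      (⌊(1 - ε) / ε⌋ : ℝ) * (2 * ((i : ℝ) - 1) + 1) * ε ≥
        (1 - 2 * ε) * (2 * (i : ℝ) - 1)) ∧
    (1 + ∑ i ∈ Finset.Icc 2 h, (1 - 2 * ε) * (2 * (i : ℝ) - 1) ≥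
      (1 - 2 * ε) * (h : ℝ) ^ 2) ∧
    (1 - 2 * ε) * (h : ℝ) ^ 2 ≥ (h : ℝ) ^ 2 / 2 := by
  refine ⟨?_, ?_, ?_⟩
  · intro i hi
    have hi1 : (1 : ℝ) ≤ (i : ℝ) := by exact_mod_cast hi
    have hfl : (⌊(1 - ε) / ε⌋ : ℝ) ≥ (1 - ε) / ε - 1 :=
      le_of_lt (Int.sub_one_lt_floor _)
    have hpos : (0 : ℝ) ≤ 2 * ((i : ℝ) - 1) + 1 := by linarith
    have key : ((1 - ε) / ε - 1) * (2 * ((i : ℝ) - 1) + 1) * ε =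
        (1 - 2 * ε) * (2 * (i : ℝ) - 1) := by
      field_simp
      ring
    have h1 : (⌊(1 - ε) / ε⌋ : ℝ) * (2 * ((i : ℝ) - 1) + 1) * ε ≥
        ((1 - ε) / ε - 1) * (2 * ((i : ℝ) - 1) + 1) * ε := by
      apply mul_le_mul_of_nonneg_right _ (le_of_lt hε0)
      exact mul_le_mul_of_nonneg_right hfl hpos
    linarith [key ▸ h1]
  · induction h with
    | zero => omega
    | succ n ih =>
      rcases Nat.eq_or_lt_of_le hh with h1 | h1
      · simp [← h1]
        nlinarith
      · have hn : 1 ≤ n := by omega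
        have := ih hn
        rw [Finset.sum_Icc_succ_top (by omega : 2 ≤ n + 1)]
        push_cast
        push_cast at this
        nlinarith
  · have : (0:ℝ) ≤ (h : ℝ) ^ 2 := sq_nonneg _
    nlinarith
end
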